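/- Let g : (0,∞) → (0,∞) satisfy the optimal power-adaptation constraint E[(1/g(S) − 1/Z)·1{Z > g(S)}] = S for every S > 0. Then S·g(S) → 1 as S → ∞ (i.e., the high-SNR pre-log constant of the optimal power and rate adaptation scheme equals 1). -/

import Mathlib

open MeasureTheory Filter Topology

/-- **High-SNR pre-log constant of optimal power and rate adaptation.**
Let `Z` be an effective channel gain with `P(Z > 0) = 1`, and let `g : (0,∞) → (0,∞)` satisfy
the optimal power-adaptation constraint `E[(1/g(S) − 1/Z)·1{Z > g(S)}] = S` for every `S > 0`.
Then `S·g(S) → 1` as `S → ∞`. -/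
theorem prelog_OA
    {Ω : Type*} [MeasurableSpace Ω] (P : Measure Ω) [IsProbabilityMeasure P]
    (Z : Ω → ℝ) (hZ : Measurable Z) (hZpos : P {ω | 0 < Z ω} = 1)
    (g : ℝ → ℝ) (hgpos : ∀ S, 0 < S → 0 < g S)
    (hg : ∀ S, 0 < S →
      ∫ ω, (if g S < Z ω then (g S)⁻¹ - (Z ω)⁻¹ else 0) ∂P = S) :
    Tendsto (fun S => S * g S) atTop (𝓝 1) := by
  rw [Metric.tendsto_atTop]
  intro ε hε
  set η : ℝ := min (ε / 3) (1 / 2) with hηdef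
  have hη0 : 0 < η := lt_min (by linarith) (by norm_num)
  have hη1 : η ≤ 1 / 2 := min_le_right _ _
  have hηε : η ≤ ε / 3 := min_le_left _ _
  -- approximating sets
  set A : ℕ → Set Ω := fun n => {ω | ((n : ℝ) + 1)⁻¹ < Z ω} with hAdef
  have hAmeas : ∀ n, MeasurableSet (A n) := fun n =>
    measurableSet_lt measurable_const hZ
  have hAm : Monotone A := by
    intro n m hnm ω hω
    have h1 : ((m : ℝ) + 1)⁻¹ ≤ ((n : ℝ) + 1)⁻¹ := by
      apply inv_anti₀ (by positivity)
      exact_mod_cast Nat.add_le_add_right hnm 1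
    exact lt_of_le_of_lt h1 hω
  have hUnion : ⋃ n, A n = {ω | 0 < Z ω} := by
    ext ω
    simp only [Set.mem_iUnion, hAdef, Set.mem_setOf_eq]
    constructor
    · rintro ⟨n, hn⟩
      exact lt_trans (by positivity) hn
    · intro h
      obtain ⟨n, hn⟩ := exists_nat_one_div_lt h
      exact ⟨n, by rwa [one_div] at hn⟩
  have hT : Tendsto (fun n => (P (A n)).toReal) atTop (𝓝 1) := by
    have h1 : Tendsto (fun n => P (A n)) atTop (𝓝 (P (⋃ n, A n))) :=
      tendsto_measure_iUnion_atTop hAm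
    rw [hUnion, hZpos] at h1
    have h2 := (ENNReal.tendsto_toReal (by simp : (1 : ENNReal) ≠ ⊤)).comp h1
    simpa [Function.comp_def] using h2
  obtain ⟨n₀, hn₀⟩ :=
    (hT.eventually (eventually_gt_nhds (show 1 - η < 1 by linarith))).exists
  set δ : ℝ := ((n₀ : ℝ) + 1)⁻¹ with hδdef
  have hδ0 : 0 < δ := by positivity
  set t : ℝ := (P (A n₀)).toReal with htdef
  have htη : 1 - η < t := hn₀
  have ht0 : 0 ≤ t := ENNReal.toReal_nonneg
  have ht1 : t ≤ 1 := by
    rw [htdef]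
    have := prob_le_one (μ := P) (s := A n₀)
    exact ENNReal.toReal_le_of_le_ofReal zero_le_one (by simpa using this)
  refine ⟨max 1 (η * δ)⁻¹, fun S hS => ?_⟩
  have hS1 : (1 : ℝ) ≤ S := le_trans (le_max_left _ _) hS
  have hS0 : 0 < S := by linarith
  have hSηδ : (η * δ)⁻¹ ≤ S := le_trans (le_max_right _ _) hS
  have hc0 : 0 < g S := hgpos S hS0
  set c : ℝ := g S with hcdef
  set f : Ω → ℝ := fun ω => if c < Z ω then c⁻¹ - (Z ω)⁻¹ else 0 with hfdef
  have hf0 : ∀ ω, 0 ≤ f ω := by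
    intro ω
    rw [hfdef]
    by_cases h : c < Z ω
    · simp only [h, if_true]
      have h1 : (Z ω)⁻¹ ≤ c⁻¹ := inv_anti₀ hc0 h.le
      linarith
    · simp [h]
  have hfub : ∀ ω, f ω ≤ c⁻¹ := by
    intro ω
    rw [hfdef]
    by_cases h : c < Z ω
    · simp only [h, if_true]
      have h1 : 0 < Z ω := lt_trans hc0 h
      have h2 : 0 ≤ (Z ω)⁻¹ := by positivity
      linarith
    · simp only [h, if_false]
      positivity
  have hfmeas : Measurable f := by
    rw [hfdef]
    exact Measurable.ite (measurableSet_lt measurable_const hZ)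
      (measurable_const.sub hZ.inv) measurable_const
  have hfint : Integrable f P := by
    refine (integrable_const c⁻¹).mono' hfmeas.aestronglyMeasurable ?_
    refine ae_of_all _ fun ω => ?_
    rw [Real.norm_eq_abs, abs_of_nonneg (hf0 ω)]
    exact hfub ω
  have hgS : ∫ ω, f ω ∂P = S := hg S hS0
  -- upper bound: S ≤ c⁻¹
  have hupper : S ≤ c⁻¹ := by
    rw [← hgS]
    calc ∫ ω, f ω ∂P ≤ ∫ _, c⁻¹ ∂P :=
          integral_mono hfint (integrable_const _) hfub
      _ = c⁻¹ := by simp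
  have hSc1 : S * c ≤ 1 := by
    have h1 := mul_le_mul_of_nonneg_right hupper hc0.le
    rwa [inv_mul_cancel₀ hc0.ne'] at h1
  -- c is small
  have hcηδ : c ≤ η * δ := by
    have h2 : c * (η * δ)⁻¹ ≤ c * S := mul_le_mul_of_nonneg_left hSηδ hc0.le
    have h3 : c * (η * δ)⁻¹ ≤ 1 := le_trans h2 (by linarith [hSc1])
    rw [← div_eq_mul_inv, div_le_one (by positivity)] at h3
    exact h3
  have hcδ : c ≤ δ := le_trans hcηδ (by nlinarith)
  have hcδη : c / δ ≤ η := by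
    rw [div_le_iff₀ hδ0]
    linarith [hcηδ]
  -- lower bound: (1 - c/δ) * t ≤ S * c
  have hlint : Integrable ((A n₀).indicator fun _ => (1 : ℝ) - c / δ) P :=
    (integrable_const _).indicator (hAmeas n₀)
  have hlow : (1 - c / δ) * t ≤ S * c := by
    have hpt : ∀ ω, (A n₀).indicator (fun _ => (1 : ℝ) - c / δ) ω ≤ c * f ω := by
      intro ω
      by_cases h : ω ∈ A n₀
      · rw [Set.indicator_of_mem h]
        have hδZ : δ < Z ω := h
        have hcZ : c < Z ω := lt_of_le_of_lt hcδ hδZ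
        have hZω0 : 0 < Z ω := lt_trans hδ0 hδZ
        rw [hfdef]
        simp only [hcZ, if_true]
        rw [mul_sub, mul_inv_cancel₀ hc0.ne']
        have hZinv : (Z ω)⁻¹ ≤ δ⁻¹ := inv_anti₀ hδ0 hδZ.le
        have h2 : c * (Z ω)⁻¹ ≤ c * δ⁻¹ := mul_le_mul_of_nonneg_left hZinv hc0.le
        rw [div_eq_mul_inv]
        linarith
      · rw [Set.indicator_of_notMem h]
        exact mul_nonneg hc0.le (hf0 ω)
    have h1 : ∫ ω, (A n₀).indicator (fun _ => (1 : ℝ) - c / δ) ω ∂P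
        ≤ ∫ ω, c * f ω ∂P := integral_mono hlint (hfint.const_mul c) hpt
    rw [integral_indicator_const _ (hAmeas n₀), integral_const_mul, hgS] at h1
    simpa [smul_eq_mul, mul_comm, measureReal_def, ← htdef] using h1
  -- conclude
  rw [Real.dist_eq, abs_lt]
  constructor
  · nlinarith
  · linarith [hSc1]
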